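/- The quasi-shuffle algebra (ℚ⟨Y⟩, m_*) together with the deconcatenation coproduct Δ(w) = Σ_{uv = w} u ⊗ v is a bialgebra; i.e., Δ is an algebra homomorphism with respect to the quasi-shuffle product. -/

import Mathlib

open TensorProduct

/-- The quasi-shuffle product of two words in `ℚ⟨Y⟩`, `Y = {yₙ : n ∈ ℤ}`. -/
noncomputable def qsh : List ℤ → List ℤ → (List ℤ →₀ ℚ)
  | [], u => Finsupp.single u 1
  | u, [] => Finsupp.single u 1
  | n :: u, m :: v =>
      Finsupp.mapDomain (List.cons n) (qsh u (m :: v)) +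
      Finsupp.mapDomain (List.cons m) (qsh (n :: u) v) +
      Finsupp.mapDomain (List.cons (n + m)) (qsh u v)
termination_by a b => a.length + b.length

/-- Deconcatenation coproduct of a word: `Δ(w) = ∑_{uv=w} u ⊗ v`. -/
noncomputable def deltaWord (w : List ℤ) :
    (List ℤ →₀ ℚ) ⊗[ℚ] (List ℤ →₀ ℚ) :=
  ∑ i ∈ Finset.range (w.length + 1),
    Finsupp.single (w.take i) (1 : ℚ) ⊗ₜ[ℚ] Finsupp.single (w.drop i) (1 : ℚ)

/-- Linear extension of the deconcatenation coproduct to `ℚ⟨Y⟩`. -/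
noncomputable def deltaLin :
    (List ℤ →₀ ℚ) →ₗ[ℚ] (List ℤ →₀ ℚ) ⊗[ℚ] (List ℤ →₀ ℚ) :=
  Finsupp.lift _ ℚ (List ℤ) deltaWord


lemma qsh_nil_left (u : List ℤ) : qsh [] u = Finsupp.single u 1 := by
  cases u <;> rw [qsh] <;> simp

lemma qsh_nil_right (u : List ℤ) : qsh u [] = Finsupp.single u 1 := by
  cases u <;> rw [qsh] <;> simp

lemma qsh_cons_cons (n m : ℤ) (u v : List ℤ) :
    qsh (n :: u) (m :: v) =
      Finsupp.mapDomain (List.cons n) (qsh u (m :: v)) +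
      Finsupp.mapDomain (List.cons m) (qsh (n :: u) v) +
      Finsupp.mapDomain (List.cons (n + m)) (qsh u v) := by
  rw [qsh]

lemma deltaLin_single (w : List ℤ) (a : ℚ) :
    deltaLin (Finsupp.single w a) = a • deltaWord w := by
  simp [deltaLin, Finsupp.lift_apply, Finsupp.sum_single_index]

lemma deltaWord_cons (n : ℤ) (w : List ℤ) :
    deltaWord (n :: w) =
      Finsupp.single ([] : List ℤ) (1:ℚ) ⊗ₜ[ℚ] Finsupp.single (n :: w) (1:ℚ) +
      ∑ i ∈ Finset.range (w.length + 1),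
        Finsupp.single (n :: w.take i) (1 : ℚ) ⊗ₜ[ℚ] Finsupp.single (w.drop i) (1 : ℚ) := by
  rw [deltaWord, List.length_cons, Finset.sum_range_succ']
  simp [add_comm]

lemma deltaLin_mapCons (n : ℤ) (f : List ℤ →₀ ℚ) :
    deltaLin (Finsupp.mapDomain (List.cons n) f) =
      Finsupp.single ([] : List ℤ) (1:ℚ) ⊗ₜ[ℚ] Finsupp.mapDomain (List.cons n) f +
      TensorProduct.map (Finsupp.lmapDomain ℚ ℚ (List.cons n)) LinearMap.id (deltaLin f) := by
  induction f using Finsupp.induction_linear with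
  | zero => simp
  | add f g hf hg =>
      rw [Finsupp.mapDomain_add, map_add, hf, hg, map_add, map_add, tmul_add]
      exact add_add_add_comm _ _ _ _
  | single w a =>
      rw [Finsupp.mapDomain_single, deltaLin_single, deltaLin_single, deltaWord_cons,
        smul_add, map_smul]
      congr 1
      · rw [← Finsupp.smul_single_one (n::w) a, tmul_smul]
      · congr 1
        rw [deltaWord, map_sum]
        simp [Finsupp.mapDomain_single]

lemma split4 {M : Type*} [AddCommMonoid M] (N K : ℕ) (F : ℕ → ℕ → M) :
    (∑ i ∈ Finset.range (N+1), ∑ j ∈ Finset.range (K+1), F i j)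
    = ((∑ i ∈ Finset.range N, ∑ j ∈ Finset.range K, F (i+1) (j+1))
      + (∑ i ∈ Finset.range N, F (i+1) 0))
      + ((∑ j ∈ Finset.range K, F 0 (j+1)) + F 0 0) := by
  rw [Finset.sum_range_succ' (fun i => ∑ j ∈ Finset.range (K+1), F i j) N]
  simp only [Finset.sum_range_succ' _ K]
  rw [Finset.sum_add_distrib]

lemma push2 (c : ℤ) (N K : ℕ) (f g : ℕ → ℕ → (List ℤ →₀ ℚ)) :
    TensorProduct.map (Finsupp.lmapDomain ℚ ℚ (List.cons c)) LinearMap.id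
      (∑ i ∈ Finset.range N, ∑ j ∈ Finset.range K, f i j ⊗ₜ[ℚ] g i j) =
    ∑ i ∈ Finset.range N, ∑ j ∈ Finset.range K,
      Finsupp.mapDomain (List.cons c) (f i j) ⊗ₜ[ℚ] g i j := by
  simp [map_sum]

lemma push1 (c : ℤ) (N : ℕ) (f g : ℕ → (List ℤ →₀ ℚ)) :
    TensorProduct.map (Finsupp.lmapDomain ℚ ℚ (List.cons c)) LinearMap.id
      (∑ i ∈ Finset.range N, f i ⊗ₜ[ℚ] g i) =
    ∑ i ∈ Finset.range N, Finsupp.mapDomain (List.cons c) (f i) ⊗ₜ[ℚ] g i := by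
  simp [map_sum]

/-- The deconcatenation coproduct is an algebra homomorphism for the
quasi-shuffle product: on basis words,
`Δ(w₁ * w₂) = Δ(w₁) · Δ(w₂)`, the product on the right being the
componentwise quasi-shuffle product on the tensor square. -/
theorem delta_quasiShuffle_hom (w₁ w₂ : List ℤ) :
    deltaLin (qsh w₁ w₂) =
      ∑ i ∈ Finset.range (w₁.length + 1), ∑ j ∈ Finset.range (w₂.length + 1),
        qsh (w₁.take i) (w₂.take j) ⊗ₜ[ℚ] qsh (w₁.drop i) (w₂.drop j) := by
  match w₁, w₂ with
  | [], w₂ =>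
      rw [qsh_nil_left, deltaLin_single, one_smul, deltaWord]
      simp [qsh_nil_left]
  | n :: u, [] =>
      rw [qsh_nil_right, deltaLin_single, one_smul, deltaWord]
      simp [qsh_nil_right]
  | n :: u, m :: v =>
      have IH1' : deltaLin (qsh u (m :: v)) =
          (∑ i ∈ Finset.range (u.length + 1), ∑ j ∈ Finset.range (v.length + 1),
            qsh (u.take i) (m :: v.take j) ⊗ₜ[ℚ] qsh (u.drop i) (v.drop j)) +
          ∑ i ∈ Finset.range (u.length + 1),
            qsh (u.take i) [] ⊗ₜ[ℚ] qsh (u.drop i) (m :: v) := by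
        rw [delta_quasiShuffle_hom u (m :: v), ← Finset.sum_add_distrib]
        refine Finset.sum_congr rfl fun i _ => ?_
        rw [List.length_cons, Finset.sum_range_succ']
        simp
      have IH2' : deltaLin (qsh (n :: u) v) =
          (∑ i ∈ Finset.range (u.length + 1), ∑ j ∈ Finset.range (v.length + 1),
            qsh (n :: u.take i) (v.take j) ⊗ₜ[ℚ] qsh (u.drop i) (v.drop j)) +
          ∑ j ∈ Finset.range (v.length + 1),
            qsh ([] : List ℤ) (v.take j) ⊗ₜ[ℚ] qsh (n :: u) (v.drop j) := by
        rw [delta_quasiShuffle_hom (n :: u) v, List.length_cons,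
          Finset.sum_range_succ']
        simp
      have IH3 := delta_quasiShuffle_hom u v
      rw [qsh_cons_cons, map_add, map_add, deltaLin_mapCons, deltaLin_mapCons,
        deltaLin_mapCons, IH1', IH2', IH3]
      rw [map_add, map_add, push2 n, push1 n, push2 m, push1 m, push2 (n+m)]
      conv_rhs => rw [List.length_cons, List.length_cons, split4]
      simp only [List.take_succ_cons, List.drop_succ_cons, List.take_zero,
        List.drop_zero]
      have hT11 : (∑ i ∈ Finset.range (u.length + 1), ∑ j ∈ Finset.range (v.length + 1),
            qsh (n :: u.take i) (m :: v.take j) ⊗ₜ[ℚ] qsh (u.drop i) (v.drop j))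
          = (∑ i ∈ Finset.range (u.length + 1), ∑ j ∈ Finset.range (v.length + 1),
              Finsupp.mapDomain (List.cons n) (qsh (u.take i) (m :: v.take j)) ⊗ₜ[ℚ]
                qsh (u.drop i) (v.drop j))
            + (∑ i ∈ Finset.range (u.length + 1), ∑ j ∈ Finset.range (v.length + 1),
              Finsupp.mapDomain (List.cons m) (qsh (n :: u.take i) (v.take j)) ⊗ₜ[ℚ]
                qsh (u.drop i) (v.drop j))
            + (∑ i ∈ Finset.range (u.length + 1), ∑ j ∈ Finset.range (v.length + 1),
              Finsupp.mapDomain (List.cons (n + m)) (qsh (u.take i) (v.take j)) ⊗ₜ[ℚ]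
                qsh (u.drop i) (v.drop j)) := by
        simp only [qsh_cons_cons, add_tmul, Finset.sum_add_distrib]
      have hT10 : (∑ i ∈ Finset.range (u.length + 1),
            qsh (n :: u.take i) ([] : List ℤ) ⊗ₜ[ℚ] qsh (u.drop i) (m :: v))
          = ∑ i ∈ Finset.range (u.length + 1),
              Finsupp.mapDomain (List.cons n) (qsh (u.take i) ([] : List ℤ)) ⊗ₜ[ℚ]
                qsh (u.drop i) (m :: v) := by
        simp [qsh_nil_right]
      have hT01 : (∑ j ∈ Finset.range (v.length + 1),
            qsh ([] : List ℤ) (m :: v.take j) ⊗ₜ[ℚ] qsh (n :: u) (v.drop j))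
          = ∑ j ∈ Finset.range (v.length + 1),
              Finsupp.mapDomain (List.cons m) (qsh ([] : List ℤ) (v.take j)) ⊗ₜ[ℚ]
                qsh (n :: u) (v.drop j) := by
        simp [qsh_nil_left]
      have hT00 : qsh ([] : List ℤ) ([] : List ℤ) ⊗ₜ[ℚ] qsh (n :: u) (m :: v)
          = Finsupp.single ([] : List ℤ) (1:ℚ) ⊗ₜ[ℚ]
              Finsupp.mapDomain (List.cons n) (qsh u (m :: v)) +
            Finsupp.single ([] : List ℤ) (1:ℚ) ⊗ₜ[ℚ]
              Finsupp.mapDomain (List.cons m) (qsh (n :: u) v) +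
            Finsupp.single ([] : List ℤ) (1:ℚ) ⊗ₜ[ℚ]
              Finsupp.mapDomain (List.cons (n + m)) (qsh u v) := by
        rw [qsh_nil_left, qsh_cons_cons, tmul_add, tmul_add]
      rw [hT11, hT10, hT01, hT00]
      ac_rfl
termination_by w₁.length + w₂.length
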